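/- For any bipartite density operator ρ_AB on H_A ⊗ H_B, (C^{A|B}_{l1}(ρ_AB))² − (C_{l1}(ρ_A))² ≥ 2(Tr ρ_AB² − Tr ρ_A²). -/

import Mathlib

open scoped BigOperators ComplexOrder Kronecker

/-- Trace norm: `‖P‖_tr = Tr √(Pᴴ P)`. -/
noncomputable def traceNorm {n : Type*} [Fintype n] [DecidableEq n] (P : Matrix n n ℂ) : ℝ :=
  (((Matrix.posSemidef_conjTranspose_mul_self P).1.eigenvectorUnitary.1 *
      Matrix.diagonal (((↑) : ℝ → ℂ) ∘ (√·) ∘ (Matrix.posSemidef_conjTranspose_mul_self P).1.eigenvalues) *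
      (star (Matrix.posSemidef_conjTranspose_mul_self P).1.eigenvectorUnitary : Matrix n n ℂ)).trace).re

/-- The B-blocks of an operator on H_A ⊗ H_B. -/
def blockB {A B : Type*} (Q : Matrix (A × B) (A × B) ℂ) (i j : A) : Matrix B B ℂ :=
  fun b b' => Q (i, b) (j, b')

/-- l1 norm of IQ coherence: C^{A|B}_{l1}(ρ) = Σ_{i≠j} ‖ρ^B_{ij}‖_tr. -/
noncomputable def CIQl1 {A B : Type*} [Fintype A] [Fintype B] [DecidableEq A] [DecidableEq B]
    (ρ : Matrix (A × B) (A × B) ℂ) : ℝ :=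
  ∑ i, ∑ j, if i = j then 0 else traceNorm (blockB ρ i j)

namespace TNaux
open Matrix
set_option linter.unusedSectionVars false
variable {n : Type*} [Fintype n] [DecidableEq n]

lemma cauchy (v w : n → ℂ) :
    ‖(dotProduct (star v) w)‖ ^ 2 ≤
      (dotProduct (star v) v).re * (dotProduct (star w) w).re := by
  let x : EuclideanSpace ℂ n := WithLp.toLp 2 v
  let y : EuclideanSpace ℂ n := WithLp.toLp 2 w
  have h := norm_inner_le_norm (𝕜 := ℂ) x y
  have hxy : (inner ℂ x y : ℂ) = dotProduct (star v) w := by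
    rw [EuclideanSpace.inner_eq_star_dotProduct, dotProduct_comm]
  have hx : (dotProduct (star v) v).re = ‖x‖ ^ 2 := by
    rw [← inner_self_eq_norm_sq (𝕜 := ℂ) x, EuclideanSpace.inner_eq_star_dotProduct, dotProduct_comm]
    rfl
  have hy : (dotProduct (star w) w).re = ‖y‖ ^ 2 := by
    rw [← inner_self_eq_norm_sq (𝕜 := ℂ) y, EuclideanSpace.inner_eq_star_dotProduct, dotProduct_comm]
    rfl
  rw [hxy] at h
  rw [hx, hy]
  have : ‖(dotProduct (star v) w)‖ = ‖(dotProduct (star v) w : ℂ)‖ := rfl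
  nlinarith [norm_nonneg x, norm_nonneg y, norm_nonneg (dotProduct (star v) w)]

lemma entry_eq (M V : Matrix n n ℂ) (k : n) :
    (Vᴴ * M * V) k k = dotProduct (star (fun a => V a k)) (M *ᵥ (fun a => V a k)) := by
  simp only [Matrix.mul_apply, Matrix.mulVec, dotProduct, Matrix.conjTranspose_apply,
    Finset.sum_mul, Finset.mul_sum, Pi.star_apply]
  rw [Finset.sum_comm]
  refine Finset.sum_congr rfl fun a _ => Finset.sum_congr rfl fun b _ => by ring

variable (P : Matrix n n ℂ)

noncomputable def lam : n → ℝ :=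
  (√·) ∘ (Matrix.posSemidef_conjTranspose_mul_self P).1.eigenvalues

noncomputable def U : Matrix n n ℂ :=
  ((Matrix.posSemidef_conjTranspose_mul_self P).1.eigenvectorUnitary : Matrix n n ℂ)

lemma U_mem : (U P) ∈ Matrix.unitaryGroup n ℂ :=
  (Matrix.posSemidef_conjTranspose_mul_self P).1.eigenvectorUnitary.2

lemma lam_nonneg (k : n) : 0 ≤ lam P k :=
  Real.sqrt_nonneg _

lemma conj_diag : (U P)ᴴ * (Pᴴ * P) * (U P)
    = Matrix.diagonal (RCLike.ofReal ∘ (Matrix.posSemidef_conjTranspose_mul_self P).1.eigenvalues) := by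
  rw [← Matrix.star_eq_conjTranspose]
  have h := (Matrix.posSemidef_conjTranspose_mul_self P).1.conjStarAlgAut_star_eigenvectorUnitary
  rw [Unitary.conjStarAlgAut_star_apply] at h
  exact h

lemma conj_trace (M : Matrix n n ℂ) : ((U P)ᴴ * M * (U P)).trace = M.trace := by
  rw [Matrix.trace_mul_cycle]
  have h1 : (U P) * ((U P)ᴴ) = 1 := by
    rw [← Matrix.star_eq_conjTranspose]
    exact Matrix.mem_unitaryGroup_iff.mp (U_mem P)
  rw [h1, Matrix.one_mul]

lemma traceNorm_eq_sum : traceNorm P = ∑ k, lam P k := by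
  have h1 : (star (U P)) * (U P) = 1 := Matrix.mem_unitaryGroup_iff'.mp (U_mem P)
  rw [traceNorm, Matrix.trace_mul_cycle]
  change ((star (U P) * U P * _).trace).re = _
  rw [h1, Matrix.one_mul, Matrix.trace_diagonal]
  simp [lam, Complex.ofReal_re]

lemma traceNorm_nonneg : 0 ≤ traceNorm P := by
  rw [traceNorm_eq_sum]
  exact Finset.sum_nonneg fun k _ => lam_nonneg P k

lemma conj_sq : (U P)ᴴ * (Pᴴ * P) * (U P)
    = Matrix.diagonal (RCLike.ofReal ∘ lam P) * Matrix.diagonal (RCLike.ofReal ∘ lam P) := by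
  rw [conj_diag, Matrix.diagonal_mul_diagonal]
  congr 1
  funext k
  simp only [Function.comp_apply, lam]
  rw [← RCLike.ofReal_mul, Real.mul_self_sqrt
    ((Matrix.posSemidef_conjTranspose_mul_self P).eigenvalues_nonneg k)]

lemma trace_conjTranspose_mul_self_re : ((Pᴴ * P).trace).re = ∑ k, (lam P k) ^ 2 := by
  have h := congrArg Matrix.trace (conj_sq P)
  rw [conj_trace] at h
  rw [h, Matrix.diagonal_mul_diagonal, Matrix.trace_diagonal]
  simp [pow_two]

lemma frobenius_le : ((Pᴴ * P).trace).re ≤ (traceNorm P) ^ 2 := by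
  rw [trace_conjTranspose_mul_self_re, traceNorm_eq_sum]
  calc ∑ k, (lam P k) ^ 2 ≤ ∑ k, (lam P k) * (∑ j, lam P j) := by
        refine Finset.sum_le_sum fun k _ => ?_
        rw [pow_two]
        exact mul_le_mul_of_nonneg_left
          (Finset.single_le_sum (fun j _ => lam_nonneg P j) (Finset.mem_univ k))
          (lam_nonneg P k)
    _ = (∑ k, lam P k) ^ 2 := by rw [← Finset.sum_mul, pow_two]

lemma abs_trace_le : ‖P.trace‖ ≤ traceNorm P := by
  have hUU : (U P)ᴴ * (U P) = 1 := by
    rw [← Matrix.star_eq_conjTranspose]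
    exact Matrix.mem_unitaryGroup_iff'.mp (U_mem P)
  have htr : P.trace = ((U P)ᴴ * P * (U P)).trace := (conj_trace P P).symm
  rw [htr, Matrix.trace, traceNorm_eq_sum]
  refine le_trans (norm_sum_le _ _) (Finset.sum_le_sum fun k _ => ?_)
  -- bound each diagonal entry
  set v : n → ℂ := fun a => U P a k with hv
  have h1 : ((U P)ᴴ * P * (U P)).diag k = dotProduct (star v) (P *ᵥ v) := entry_eq P (U P) k
  have hvv : dotProduct (star v) v = 1 := by
    have : ((U P)ᴴ * (U P)) k k = 1 := by rw [hUU, Matrix.one_apply_eq]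
    rw [← this, Matrix.mul_apply]
    simp [dotProduct, Matrix.conjTranspose_apply, hv]
  have hPv : dotProduct (star (P *ᵥ v)) (P *ᵥ v) = ((lam P k : ℂ)) ^ 2 := by
    have e1 : dotProduct (star (P *ᵥ v)) (P *ᵥ v)
        = ((U P)ᴴ * (Pᴴ * P) * (U P)) k k := by
      rw [entry_eq (Pᴴ * P) (U P) k, ← hv, Matrix.star_mulVec, dotProduct_mulVec,
        dotProduct_mulVec, ← Matrix.vecMul_vecMul]
    rw [e1, conj_sq P, Matrix.diagonal_mul_diagonal, Matrix.diagonal_apply_eq]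
    simp [pow_two]
  have hcs := cauchy v (P *ᵥ v)
  rw [hvv, hPv] at hcs
  have : (((lam P k : ℂ)) ^ 2).re = (lam P k) ^ 2 := by
    simp [pow_two]
  rw [this] at hcs
  simp only [Complex.one_re, one_mul] at hcs
  have habs := norm_nonneg (dotProduct (star v) (P *ᵥ v))
  have hl := lam_nonneg P k
  rw [congrArg norm h1]
  nlinarith

end TNaux


namespace TNaux
open Matrix
set_option linter.unusedSectionVars false
variable {A B : Type*} [Fintype A] [Fintype B] [DecidableEq A] [DecidableEq B]
variable (ρ : Matrix (A × B) (A × B) ℂ)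

lemma blockB_swap (hρ : ρ.IsHermitian) (i j : A) : blockB ρ j i = (blockB ρ i j)ᴴ := by
  ext b b'
  rw [Matrix.conjTranspose_apply]
  have := congrFun (congrFun hρ (j, b)) (i, b')
  rw [Matrix.conjTranspose_apply] at this
  exact this.symm

lemma blockB_diag_posSemidef (hρ : ρ.PosSemidef) (i : A) : (blockB ρ i i).PosSemidef := by
  refine Matrix.PosSemidef.of_dotProduct_mulVec_nonneg ?_ fun x => ?_
  · exact (blockB_swap ρ hρ.1 i i).symm
  · have h := hρ.dotProduct_mulVec_nonneg (fun p => if p.1 = i then x p.2 else 0)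
    have e : dotProduct (star (fun p : A × B => if p.1 = i then x p.2 else 0))
        (ρ *ᵥ (fun p : A × B => if p.1 = i then x p.2 else 0))
        = dotProduct (star x) (blockB ρ i i *ᵥ x) := by
      simp only [dotProduct, Matrix.mulVec, Fintype.sum_prod_type, Pi.star_apply,
        apply_ite (starRingEnd ℂ), map_zero, ite_mul, zero_mul, mul_ite, mul_zero, blockB]
      rw [Finset.sum_eq_single i (fun b _ hb => by simp [hb]) (fun h => absurd (Finset.mem_univ i) h)]
      simp
    rw [e] at h
    exact h

lemma trace_sq_decomp :
    (ρ * ρ).trace = ∑ p : A × A, ((blockB ρ p.1 p.2) * (blockB ρ p.2 p.1)).trace := by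
  simp only [Matrix.trace, Matrix.diag_apply, Matrix.mul_apply, blockB,
    Fintype.sum_prod_type]
  exact Finset.sum_congr rfl fun i _ => Finset.sum_comm

lemma traceA_sq_decomp :
    (((Matrix.of fun i j => (blockB ρ i j).trace) : Matrix A A ℂ)
      * (Matrix.of fun i j => (blockB ρ i j).trace)).trace
    = ∑ p : A × A, ((blockB ρ p.1 p.2).trace * (blockB ρ p.2 p.1).trace) := by
  simp only [Matrix.trace, Matrix.diag_apply, Matrix.mul_apply, Matrix.of_apply,
    Fintype.sum_prod_type]

lemma re_trace_sq_le_of_posSemidef {C : Matrix B B ℂ} (hC : C.PosSemidef) :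
    ((C * C).trace).re ≤ ((C.trace) * (C.trace)).re := by
  have h1 : ((Cᴴ * C).trace).re ≤ ((C.trace).re) ^ 2 := by
    set V : Matrix B B ℂ := (hC.1.eigenvectorUnitary : Matrix B B ℂ) with hV
    have hD : star V * C * V = Matrix.diagonal (RCLike.ofReal ∘ hC.1.eigenvalues) := by
      have h := hC.1.conjStarAlgAut_star_eigenvectorUnitary
      rw [Unitary.conjStarAlgAut_star_apply] at h
      exact h
    have hVV : V * star V = 1 := Matrix.mem_unitaryGroup_iff.mp hC.1.eigenvectorUnitary.2
    have e : (Cᴴ * C).trace = ∑ k, ((hC.1.eigenvalues k : ℂ)) ^ 2 := by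
      have h2 : (star V * C * V) * (star V * C * V) = star V * (C * (V * star V) * C) * V := by
        noncomm_ring
      have h3 : (Cᴴ * C).trace = ((star V * C * V) * (star V * C * V)).trace := by
        rw [h2, hVV, Matrix.mul_one, Matrix.trace_mul_cycle, hVV, Matrix.one_mul, hC.1.eq]
      rw [h3, hD, Matrix.diagonal_mul_diagonal, Matrix.trace_diagonal]
      simp [pow_two]
    rw [e, hC.1.trace_eq_sum_eigenvalues, Complex.re_sum, Complex.re_sum]
    simp only [← Complex.ofReal_pow, Complex.ofReal_re, RCLike.ofReal_re]
    calc ∑ k, (hC.1.eigenvalues k) ^ 2 ≤ ∑ k, (hC.1.eigenvalues k) * (∑ j, hC.1.eigenvalues j) := by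
          refine Finset.sum_le_sum fun k _ => ?_
          rw [pow_two]
          exact mul_le_mul_of_nonneg_left
            (Finset.single_le_sum (fun j _ => hC.eigenvalues_nonneg j) (Finset.mem_univ k))
            (hC.eigenvalues_nonneg k)
      _ = (∑ k, hC.1.eigenvalues k) ^ 2 := by rw [← Finset.sum_mul, pow_two]
  have h3 : Cᴴ = C := hC.1
  have h4 : star C.trace = C.trace := by
    rw [← Matrix.trace_conjTranspose, h3]
  have him : (C.trace).im = 0 := by
    have := congrArg Complex.im h4
    simp only [Complex.star_def, Complex.conj_im] at this
    linarith
  rw [h3] at h1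
  rw [Complex.mul_re, him]
  simpa [pow_two] using h1

lemma re_trace_mul_swap_le (P : Matrix B B ℂ) :
    ((P * Pᴴ).trace).re ≤ traceNorm P * traceNorm Pᴴ := by
  have h0 : (P * Pᴴ).trace = (Pᴴ * P).trace := Matrix.trace_mul_comm P Pᴴ
  have h1 : ((Pᴴ * P).trace).re ≤ (traceNorm P) ^ 2 := frobenius_le P
  have h2 : ((P * Pᴴ).trace).re ≤ (traceNorm Pᴴ) ^ 2 := by
    have := frobenius_le Pᴴ
    rwa [Matrix.conjTranspose_conjTranspose] at this
  have h3 : 0 ≤ ((Pᴴ * P).trace).re := by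
    rw [trace_conjTranspose_mul_self_re]
    exact Finset.sum_nonneg fun k _ => sq_nonneg _
  have h4 := traceNorm_nonneg P
  have h5 := traceNorm_nonneg Pᴴ
  rw [h0] at h2
  rw [h0]
  nlinarith [mul_le_mul h1 h2 h3 (sq_nonneg (traceNorm P)), mul_nonneg h4 h5, h3]

end TNaux


lemma TNaux.combin {P : Type*} [Fintype P] [DecidableEq P] (s : Equiv.Perm P) (f g r a : P → ℝ)
    (hf0 : ∀ p, 0 ≤ f p) (hg0 : ∀ p, 0 ≤ g p) (hgf : ∀ p, g p ≤ f p)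
    (hgs : ∀ p, g (s p) = g p)
    (hfix : ∀ p, s p = p → f p = 0 ∧ g p = 0)
    (hkey : ∀ p, r p - a p ≤ f p * f (s p) - g p ^ 2) :
    2 * ((∑ p, r p) - (∑ p, a p)) ≤ (∑ p, f p) ^ 2 - (∑ p, g p) ^ 2 := by
  classical
  have chain1 : ∀ p, (f p * f p - g p * g p) + (f p * f (s p) - g p * g (s p))
      ≤ ∑ q, (f p * f q - g p * g q) := by
    intro p
    by_cases hp : s p = p
    · obtain ⟨h1, h2⟩ := hfix p hp
      simp [h1, h2]
    · have hne : p ≠ s p := fun hh => hp hh.symm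
      calc (f p * f p - g p * g p) + (f p * f (s p) - g p * g (s p))
          = ∑ q ∈ ({p, s p} : Finset P), (f p * f q - g p * g q) := by
            rw [Finset.sum_pair hne]
        _ ≤ ∑ q, (f p * f q - g p * g q) := by
            refine Finset.sum_le_sum_of_subset_of_nonneg (Finset.subset_univ _) ?_
            intro q _ _
            exact sub_nonneg.2 (mul_le_mul (hgf p) (hgf q) (hg0 q) (hf0 p))
  have expand : (∑ p, f p) ^ 2 - (∑ p, g p) ^ 2
      = ∑ p, ∑ q, (f p * f q - g p * g q) := by
    rw [pow_two, pow_two, Finset.sum_mul_sum, Finset.sum_mul_sum, ← Finset.sum_sub_distrib]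
    exact Finset.sum_congr rfl fun p _ => (Finset.sum_sub_distrib _ _).symm
  have chainSum : (∑ p, (f p * f p - g p * g p))
      + (∑ p, (f p * f (s p) - g p * g (s p)))
      ≤ (∑ p, f p) ^ 2 - (∑ p, g p) ^ 2 := by
    rw [expand, ← Finset.sum_add_distrib]
    exact Finset.sum_le_sum fun p _ => chain1 p
  have hgs_eq : (∑ p, g p * g (s p)) = ∑ p, g p * g p :=
    Finset.sum_congr rfl fun p _ => by rw [hgs]
  have reindex : (∑ p, f (s p) * f (s p)) = ∑ p, f p * f p :=
    Equiv.sum_comp s (fun p => f p * f p)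
  have amgm : (∑ p, f p * f (s p)) ≤ ∑ p, f p * f p := by
    have h2 : (∑ p, f p * f (s p)) ≤ ∑ p, (f p * f p + f (s p) * f (s p)) / 2 :=
      Finset.sum_le_sum fun p _ => by nlinarith [sq_nonneg (f p - f (s p))]
    calc (∑ p, f p * f (s p)) ≤ _ := h2
      _ = ((∑ p, f p * f p) + (∑ p, f (s p) * f (s p))) / 2 := by
          rw [← Finset.sum_div, Finset.sum_add_distrib]
      _ = ∑ p, f p * f p := by rw [reindex]; ring
  have keysum : (∑ p, r p) - (∑ p, a p)
      ≤ (∑ p, f p * f (s p)) - (∑ p, g p * g p) := by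
    rw [← Finset.sum_sub_distrib, ← Finset.sum_sub_distrib]
    refine Finset.sum_le_sum fun p _ => ?_
    have := hkey p
    nlinarith [this]
  have hSff : (∑ p, (f p * f p - g p * g p))
      = (∑ p, f p * f p) - (∑ p, g p * g p) := Finset.sum_sub_distrib _ _
  have hSfs : (∑ p, (f p * f (s p) - g p * g (s p)))
      = (∑ p, f p * f (s p)) - (∑ p, g p * g (s p)) := Finset.sum_sub_distrib _ _
  rw [hSff, hSfs, hgs_eq] at chainSum
  linarith [chainSum, amgm, keysum]

set_option maxHeartbeats 1000000 in
/-- (C^{A|B}_{l1}(ρ_AB))² − (C_{l1}(ρ_A))² ≥ 2 (Tr ρ_AB² − Tr ρ_A²),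
where ρ_A = Tr_B ρ_AB has entries (ρ_A)_{ij} = Tr ρ^B_{ij}. -/
theorem CIQl1_sq_sub_Cl1_sq_ge {A B : Type*} [Fintype A] [Fintype B] [DecidableEq A]
    [DecidableEq B] (ρ : Matrix (A × B) (A × B) ℂ) (hρ : ρ.PosSemidef) (hTr : ρ.trace = 1) :
    (CIQl1 ρ) ^ 2 - (∑ i, ∑ j, if i = j then 0 else ‖((blockB ρ i j).trace)‖) ^ 2 ≥
      2 * (((ρ * ρ).trace).re -
        ((((Matrix.of fun i j => (blockB ρ i j).trace) :
            Matrix A A ℂ) * (Matrix.of fun i j => (blockB ρ i j).trace)).trace).re) := by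
  classical
  have hT : CIQl1 ρ
      = ∑ p : A × A, (if p.1 = p.2 then 0 else traceNorm (blockB ρ p.1 p.2)) := by
    rw [CIQl1]
    exact (Fintype.sum_prod_type
      (fun p : A × A => if p.1 = p.2 then 0 else traceNorm (blockB ρ p.1 p.2))).symm
  have hS : (∑ i, ∑ j, if i = j then 0 else ‖((blockB ρ i j).trace)‖)
      = ∑ p : A × A, (if p.1 = p.2 then 0 else ‖((blockB ρ p.1 p.2).trace)‖) :=
    (Fintype.sum_prod_type
      (fun p : A × A => if p.1 = p.2 then 0 else ‖((blockB ρ p.1 p.2).trace)‖)).symm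
  have hR : ((ρ * ρ).trace).re
      = ∑ p : A × A, (((blockB ρ p.1 p.2) * (blockB ρ p.2 p.1)).trace).re := by
    rw [TNaux.trace_sq_decomp, Complex.re_sum]
  have hA2 : ((((Matrix.of fun i j => (blockB ρ i j).trace) :
      Matrix A A ℂ) * (Matrix.of fun i j => (blockB ρ i j).trace)).trace).re
      = ∑ p : A × A, (((blockB ρ p.1 p.2).trace) * ((blockB ρ p.2 p.1).trace)).re := by
    rw [TNaux.traceA_sq_decomp, Complex.re_sum]
  rw [ge_iff_le, hT, hS, hR, hA2]
  refine TNaux.combin (Equiv.prodComm A A)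
    (fun p => if p.1 = p.2 then 0 else traceNorm (blockB ρ p.1 p.2))
    (fun p => if p.1 = p.2 then 0 else ‖((blockB ρ p.1 p.2).trace)‖)
    (fun p => (((blockB ρ p.1 p.2) * (blockB ρ p.2 p.1)).trace).re)
    (fun p => (((blockB ρ p.1 p.2).trace) * ((blockB ρ p.2 p.1).trace)).re)
    ?_ ?_ ?_ ?_ ?_ ?_
  · rintro ⟨i, j⟩
    by_cases h : i = j <;> simp [h, TNaux.traceNorm_nonneg]
  · rintro ⟨i, j⟩
    by_cases h : i = j <;> simp [h, norm_nonneg]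
  · rintro ⟨i, j⟩
    by_cases h : i = j <;> simp [h, TNaux.abs_trace_le]
  · rintro ⟨i, j⟩
    simp only [Equiv.prodComm_apply, Prod.swap_prod_mk]
    by_cases h : i = j
    · simp [h]
    · simp only [h, Ne.symm h, if_false]
      rw [TNaux.blockB_swap ρ hρ.1 i j, Matrix.trace_conjTranspose]
      exact Complex.norm_conj _
  · rintro ⟨i, j⟩ hp
    simp only [Equiv.prodComm_apply, Prod.swap_prod_mk, Prod.mk.injEq] at hp
    obtain ⟨h1, _⟩ := hp
    constructor <;> simp [h1]
  · rintro ⟨i, j⟩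
    simp only [Equiv.prodComm_apply, Prod.swap_prod_mk]
    by_cases h : i = j
    · subst h
      have h1 := TNaux.re_trace_sq_le_of_posSemidef (TNaux.blockB_diag_posSemidef ρ hρ i)
      simp only [eq_self_iff_true, if_true]
      nlinarith [h1]
    · have hBswap : blockB ρ j i = Matrix.conjTranspose (blockB ρ i j) :=
        TNaux.blockB_swap ρ hρ.1 i j
      simp only [h, Ne.symm h, if_false]
      have ha2 : (((blockB ρ i j).trace) * ((blockB ρ j i).trace)).re
          = ‖((blockB ρ i j).trace)‖ ^ 2 := by
        rw [hBswap, Matrix.trace_conjTranspose, Complex.star_def, Complex.mul_conj]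
        simp [Complex.sq_norm]
      have hrle : (((blockB ρ i j) * (blockB ρ j i)).trace).re
          ≤ traceNorm (blockB ρ i j) * traceNorm (blockB ρ j i) := by
        rw [hBswap]
        exact TNaux.re_trace_mul_swap_le _
      rw [ha2]
      rw [hBswap]
      rw [hBswap] at hrle
      linarith [hrle]
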